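/- arXiv:1303.1890 — 5 statements merged into one kernel-verified Lean document; each statement's English description precedes it below -/
import Mathlib

section
/- For x, y ∈ [0,1] with x + y = c for a fixed constant c ∈ [0,1], the function E₀(x,y) = xy·log(xy) + (1-x)(1-y)·log((1-x)(1-y)) (with the convention 0·log 0 = 0) is minimized (i.e., the corresponding entropy contribution -E₀ is maximized) when x = y = c/2. -/
/-- E₀(x,y) = xy·log(xy) + (1-x)(1-y)·log((1-x)(1-y)).
Note `Real.log 0 = 0` in Mathlib, so the convention `t·log t = 0` at `t = 0` holds. -/
noncomputable def E0 (x y : ℝ) : ℝ :=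
  x * y * Real.log (x * y) + (1 - x) * (1 - y) * Real.log ((1 - x) * (1 - y))

lemma g_antitone (a b : ℝ) (ha : 0 ≤ a) (hab : a + b ≤ 1) (hb : 0 ≤ b)
    (hbound : ∀ p ∈ Set.Ioo (0:ℝ) b, p * (a + p) ≤ 1/16) :
    AntitoneOn (fun p : ℝ => p * Real.log p + (a + p) * Real.log (a + p))
      (Set.Icc 0 b) := by
  apply antitoneOn_of_deriv_nonpos (convex_Icc 0 b)
  · exact (Real.continuous_mul_log.add
      (Real.continuous_mul_log.comp (continuous_const.add continuous_id))).continuousOn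
  · intro p hp
    rw [interior_Icc] at hp
    obtain ⟨hp0, hpb⟩ := hp
    have hap : 0 < a + p := by linarith
    have h1 : HasDerivAt (fun p : ℝ => p * Real.log p) (Real.log p + 1) p :=
      Real.hasDerivAt_mul_log (ne_of_gt hp0)
    have h2 : HasDerivAt (fun p : ℝ => (a + p) * Real.log (a + p))
        ((Real.log (a + p) + 1) * 1) p := by
      exact (Real.hasDerivAt_mul_log (ne_of_gt hap)).comp p
        ((hasDerivAt_id p).const_add a)
    exact ((h1.add h2).differentiableAt).differentiableWithinAt
  · intro p hp
    rw [interior_Icc] at hp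
    obtain ⟨hp0, hpb⟩ := hp
    have hap : 0 < a + p := by linarith
    have h1 : HasDerivAt (fun p : ℝ => p * Real.log p) (Real.log p + 1) p :=
      Real.hasDerivAt_mul_log (ne_of_gt hp0)
    have h2 : HasDerivAt (fun p : ℝ => (a + p) * Real.log (a + p))
        ((Real.log (a + p) + 1) * 1) p :=
      (Real.hasDerivAt_mul_log (ne_of_gt hap)).comp p ((hasDerivAt_id p).const_add a)
    rw [HasDerivAt.deriv (f := fun p => p * Real.log p + (a + p) * Real.log (a + p)) (h1.add h2)]
    have hprod : p * (a + p) ≤ 1/16 := hbound p ⟨hp0, hpb⟩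
    have hlog : Real.log p + Real.log (a + p) = Real.log (p * (a + p)) :=
      (Real.log_mul (ne_of_gt hp0) (ne_of_gt hap)).symm
    have hle : Real.log (p * (a + p)) ≤ Real.log (1/16) :=
      Real.log_le_log (by positivity) hprod
    have h16 : Real.log (1/16) < -2 := by
      rw [Real.log_div one_ne_zero (by norm_num), Real.log_one]
      have : (2:ℝ) < Real.log 16 := by
        rw [Real.lt_log_iff_exp_lt (by norm_num)]
        have h := Real.exp_one_lt_d9
        have : Real.exp 2 = Real.exp 1 * Real.exp 1 := by
          rw [← Real.exp_add]; norm_num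
        nlinarith [Real.exp_pos 1]
      linarith
    nlinarith [hlog ▸ hle]

theorem E0_min_at_equal (c : ℝ) (hc : c ∈ Set.Icc (0 : ℝ) 1)
    (x y : ℝ) (hx : x ∈ Set.Icc (0 : ℝ) 1) (hy : y ∈ Set.Icc (0 : ℝ) 1)
    (hxy : x + y = c) :
    E0 (c / 2) (c / 2) ≤ E0 x y := by
  obtain ⟨hc0, hc1⟩ := hc
  obtain ⟨hx0, hx1⟩ := hx
  obtain ⟨hy0, hy1⟩ := hy
  set a := 1 - c with ha_def
  set b := (c/2) * (c/2) with hb_def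
  have ha : 0 ≤ a := by simp [ha_def]; linarith
  have hb : 0 ≤ b := by positivity
  have hab : a + b ≤ 1 := by simp [ha_def, hb_def]; nlinarith
  have hg := g_antitone a b ha hab hb (by
    intro p hp
    obtain ⟨hp0, hpb⟩ := hp
    have hmono : p * (a + p) ≤ b * (a + b) :=
      mul_le_mul (le_of_lt hpb) (by linarith) (by linarith) hb
    have hbab : b * (a + b) = (c/2 * (1 - c/2))^2 := by
      simp only [hb_def, ha_def]; ring
    have ht0 : 0 ≤ c/2 * (1 - c/2) := by nlinarith
    have ht1 : c/2 * (1 - c/2) ≤ 1/4 := by nlinarith [sq_nonneg (c - 1)]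
    nlinarith [mul_le_mul ht1 ht1 ht0 (by norm_num : (0:ℝ) ≤ 1/4)])
  have hp_mem : x * y ∈ Set.Icc (0:ℝ) b := by
    constructor
    · positivity
    · simp only [hb_def]; nlinarith [sq_nonneg (x - y)]
  have hb_mem : b ∈ Set.Icc (0:ℝ) b := ⟨hb, le_refl b⟩
  have key := hg hp_mem hb_mem hp_mem.2
  have e1 : E0 x y = x * y * Real.log (x * y) + (a + x * y) * Real.log (a + x * y) := by
    have h : (1 - x) * (1 - y) = a + x * y := by simp [ha_def]; nlinarith
    rw [E0, h]
  have e2 : E0 (c/2) (c/2) = b * Real.log b + (a + b) * Real.log (a + b) := by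
    have h : (1 - c/2) * (1 - c/2) = a + b := by simp [ha_def, hb_def]; ring
    rw [E0, h]
  rw [e1, e2]
  exact key
end

section
/- The Shannon entropy of any probability distribution of the form (p·q, (1-p)(1-q), p(1-q) + (1-p)q), obtained by the componentwise structure of a product of two binary distributions (p, 1-p) and (q, 1-q), is at most (3/2)·log 2. -/
/-- `x log x ≥ (x²-1)/2` on `(0,1]`, via `sinh t ≥ t`. -/
lemma xlogx_ge (x : ℝ) (hx : 0 < x) (hx1 : x ≤ 1) :
    (x ^ 2 - 1) / 2 ≤ x * Real.log x := by
  have ht : 0 ≤ -Real.log x := by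
    have := Real.log_nonpos hx.le hx1; linarith
  have hs : -Real.log x ≤ Real.sinh (-Real.log x) := Real.self_le_sinh_iff.2 ht
  rw [Real.sinh_eq] at hs
  have h1 : Real.exp (-Real.log x) = x⁻¹ := by
    rw [Real.exp_neg, Real.exp_log hx]
  have h2 : Real.exp (-(-Real.log x)) = x := by
    rw [neg_neg, Real.exp_log hx]
  rw [h1, h2] at hs
  have key : x * (-Real.log x) ≤ x * ((x⁻¹ - x) / 2) :=
    mul_le_mul_of_nonneg_left hs hx.le
  have e : x * ((x⁻¹ - x) / 2) = (1 - x ^ 2) / 2 := by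
    field_simp
  rw [e] at key
  nlinarith [key]

/-- Pointwise Gibbs inequality. -/
lemma gibbs_pt (P Q : ℝ) (hP : 0 ≤ P) (hQ : 0 < Q) :
    -(P * Real.log P) ≤ -(P * Real.log Q) + Q - P := by
  rcases eq_or_lt_of_le hP with h | h
  · simp [← h]; linarith
  · have hlog : Real.log (Q / P) ≤ Q / P - 1 :=
      Real.log_le_sub_one_of_pos (div_pos hQ h)
    rw [Real.log_div hQ.ne' h.ne'] at hlog
    have key : P * (Real.log Q - Real.log P) ≤ P * (Q / P - 1) :=
      mul_le_mul_of_nonneg_left hlog h.le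
    have e : P * (Q / P - 1) = Q - P := by
      field_simp
    rw [e] at key
    nlinarith [key]

/-- Binary entropy bound for `m ≤ 1/2`. -/
lemma entb' (m : ℝ) (h0 : 0 < m) (h1 : m ≤ 1 / 2) :
    (m - 1 / 2) ^ 2 - Real.log 2 ≤ m * Real.log m + (1 - m) * Real.log (1 - m) := by
  have hm1 : 0 < 1 - m := by linarith
  -- piece 1
  have p1 : ((2 * m) ^ 2 - 1) / 2 ≤ 2 * m * Real.log (2 * m) :=
    xlogx_ge (2 * m) (by linarith) (by linarith)
  have e1 : Real.log (2 * m) = Real.log 2 + Real.log m :=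
    Real.log_mul two_ne_zero h0.ne'
  rw [e1] at p1
  -- piece 2
  have p2 : 1 - (2 * (1 - m))⁻¹ ≤ Real.log (2 * (1 - m)) :=
    Real.one_sub_inv_le_log_of_pos (by linarith)
  have e2 : Real.log (2 * (1 - m)) = Real.log 2 + Real.log (1 - m) :=
    Real.log_mul two_ne_zero hm1.ne'
  rw [e2] at p2
  have p2' := mul_le_mul_of_nonneg_left p2 hm1.le
  have key2 : (1 - m) * (1 - (2 * (1 - m))⁻¹) = 1 / 2 - m := by
    field_simp; ring
  rw [key2] at p2'
  nlinarith [p1, p2']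

/-- Binary entropy bound: `h₂(m) ≤ log 2 - (m - 1/2)²`. -/
lemma entb (m : ℝ) (h0 : 0 < m) (h1 : m < 1) :
    -(m * Real.log m + (1 - m) * Real.log (1 - m)) ≤ Real.log 2 - (m - 1 / 2) ^ 2 := by
  rcases le_or_gt m (1 / 2) with h | h
  · have := entb' m h0 h; linarith
  · have h' := entb' (1 - m) (by linarith) (by linarith)
    have e : 1 - (1 - m) = m := by ring
    rw [e] at h'
    nlinarith [h']

theorem entropy_product_binary_le (p q : ℝ) (hp : p ∈ Set.Icc (0 : ℝ) 1)
    (hq : q ∈ Set.Icc (0 : ℝ) 1) :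
    -(p * q * Real.log (p * q)
        + (1 - p) * (1 - q) * Real.log ((1 - p) * (1 - q))
        + (p * (1 - q) + (1 - p) * q) * Real.log (p * (1 - q) + (1 - p) * q))
      ≤ (3 / 2) * Real.log 2 := by
  obtain ⟨hp0, hp1⟩ := hp
  obtain ⟨hq0, hq1⟩ := hq
  have hlog2 : 0 < Real.log 2 := Real.log_pos (by norm_num)
  by_cases h0 : p + q = 0
  · have hpz : p = 0 := by linarith
    have hqz : q = 0 := by linarith
    subst hpz; subst hqz
    simp
    positivity
  by_cases h2 : p + q = 2
  · have hpz : p = 1 := by linarith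
    have hqz : q = 1 := by linarith
    subst hpz; subst hqz
    simp
    positivity
  -- main case
  set m : ℝ := (p + q) / 2 with hm
  have hm0 : 0 < m := by
    have : 0 < p + q := lt_of_le_of_ne (by linarith) (Ne.symm h0)
    rw [hm]; linarith
  have hm1 : m < 1 := by
    have : p + q < 2 := lt_of_le_of_ne (by linarith) h2
    rw [hm]; linarith
  have hm1' : 0 < 1 - m := by linarith
  -- Gibbs
  have g1 := gibbs_pt (p * q) (m * m) (by positivity)
      (by positivity)
  have g2 := gibbs_pt ((1 - p) * (1 - q)) ((1 - m) * (1 - m)) (by nlinarith)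
      (by positivity)
  have g3 := gibbs_pt (p * (1 - q) + (1 - p) * q) (2 * (m * (1 - m))) (by nlinarith)
      (by positivity)
  have lm : Real.log (m * m) = Real.log m + Real.log m :=
    Real.log_mul hm0.ne' hm0.ne'
  have lm1 : Real.log ((1 - m) * (1 - m)) = Real.log (1 - m) + Real.log (1 - m) :=
    Real.log_mul hm1'.ne' hm1'.ne'
  have lm2 : Real.log (2 * (m * (1 - m)))
      = Real.log 2 + (Real.log m + Real.log (1 - m)) := by
    rw [Real.log_mul two_ne_zero (by positivity), Real.log_mul hm0.ne' hm1'.ne']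
  rw [lm] at g1
  rw [lm1] at g2
  rw [lm2] at g3
  -- algebraic collection of the Gibbs bound
  have E : (-(p * q * (Real.log m + Real.log m)) + m * m - p * q)
      + (-((1 - p) * (1 - q) * (Real.log (1 - m) + Real.log (1 - m)))
          + (1 - m) * (1 - m) - (1 - p) * (1 - q))
      + (-((p * (1 - q) + (1 - p) * q)
            * (Real.log 2 + (Real.log m + Real.log (1 - m))))
          + 2 * (m * (1 - m)) - (p * (1 - q) + (1 - p) * q))
      = -(2 * m * Real.log m + 2 * (1 - m) * Real.log (1 - m)
          + (p * (1 - q) + (1 - p) * q) * Real.log 2) := by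
    rw [hm]; ring
  have sum : -(p * q * Real.log (p * q)
        + (1 - p) * (1 - q) * Real.log ((1 - p) * (1 - q))
        + (p * (1 - q) + (1 - p) * q) * Real.log (p * (1 - q) + (1 - p) * q))
      ≤ -(2 * m * Real.log m + 2 * (1 - m) * Real.log (1 - m)
          + (p * (1 - q) + (1 - p) * q) * Real.log 2) := by
    linarith [g1, g2, g3, E.le, E.ge]
  -- key entropy bound
  have kb := entb m hm0 hm1
  -- c ≥ 2 m (1-m)
  have cineq : 2 * (m * (1 - m)) ≤ p * (1 - q) + (1 - p) * q := by
    rw [hm]; nlinarith [sq_nonneg (p - q)]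
  have cmul := mul_le_mul_of_nonneg_right cineq hlog2.le
  have hlog2' : Real.log 2 ≤ 1 := by
    have := Real.log_le_sub_one_of_pos (show (0:ℝ) < 2 by norm_num); linarith
  have final : -(2 * m * Real.log m + 2 * (1 - m) * Real.log (1 - m)
      + (p * (1 - q) + (1 - p) * q) * Real.log 2) ≤ (3 / 2) * Real.log 2 := by
    nlinarith [kb, cmul, sq_nonneg (m - 1/2),
      mul_nonneg (sq_nonneg (m - 1/2)) (by linarith : (0:ℝ) ≤ 1 - Real.log 2)]
  linarith [sum, final]
end

section
/- For the Moran process with neutral fitness and boundary mutation regime, the stationary distribution is given by s₀ = s_N = (2 + μN² Σᵢ₌₁^{N-1} 1/(i(N-i)))⁻¹ and s_j = s₀ · μN²/(j(N-j)) for 1 ≤ j ≤ N-1; i.e., this vector is a probability distribution satisfying the detailed balance conditions s_i T_{i→i+1} = s_{i+1} T_{i+1→i}. -/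
open Finset

/-- Stationary distribution of the neutral Moran process with boundary mutations. -/
noncomputable def moranBoundaryStat (N : ℕ) (μ : ℝ) (j : ℕ) : ℝ :=
  if j = 0 ∨ j = N then
    (2 + μ * (N : ℝ) ^ 2 * ∑ i ∈ Ico 1 N, 1 / ((i : ℝ) * ((N : ℝ) - i)))⁻¹
  else
    (2 + μ * (N : ℝ) ^ 2 * ∑ i ∈ Ico 1 N, 1 / ((i : ℝ) * ((N : ℝ) - i)))⁻¹
      * (μ * (N : ℝ) ^ 2 / ((j : ℝ) * ((N : ℝ) - j)))

/-- Up-transition probability T_{i→i+1} of the neutral boundary-mutation Moran process. -/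
noncomputable def moranBoundaryUp (N : ℕ) (μ : ℝ) (i : ℕ) : ℝ :=
  if i = 0 then μ else (i : ℝ) * ((N : ℝ) - i) / (N : ℝ) ^ 2

/-- Down-transition probability T_{i→i-1} of the neutral boundary-mutation Moran process. -/
noncomputable def moranBoundaryDown (N : ℕ) (μ : ℝ) (i : ℕ) : ℝ :=
  if i = N then μ else (i : ℝ) * ((N : ℝ) - i) / (N : ℝ) ^ 2

theorem moranBoundary_stationary (N : ℕ) (hN : 2 ≤ N) (μ : ℝ)
    (hμ : μ ∈ Set.Ioo (0 : ℝ) 1) :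
    (∀ j ≤ N, 0 ≤ moranBoundaryStat N μ j) ∧
    (∑ j ∈ range (N + 1), moranBoundaryStat N μ j) = 1 ∧
    (∀ i < N, moranBoundaryStat N μ i * moranBoundaryUp N μ i
        = moranBoundaryStat N μ (i + 1) * moranBoundaryDown N μ (i + 1)) := by
  obtain ⟨hμ0, hμ1⟩ := hμ
  have hNR : (2 : ℝ) ≤ (N : ℝ) := by exact_mod_cast hN
  have hN0 : (0 : ℝ) < (N : ℝ) := by linarith
  set S : ℝ := ∑ i ∈ Ico 1 N, 1 / ((i : ℝ) * ((N : ℝ) - i)) with hS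
  have hterm : ∀ i ∈ Ico 1 N, (0 : ℝ) < 1 / ((i : ℝ) * ((N : ℝ) - i)) := by
    intro i hi
    rw [mem_Ico] at hi
    have h1 : (0 : ℝ) < (i : ℝ) := by exact_mod_cast hi.1
    have h2 : (i : ℝ) < (N : ℝ) := by exact_mod_cast hi.2
    have : (0 : ℝ) < (i : ℝ) * ((N : ℝ) - i) := by nlinarith
    positivity
  have hSpos : 0 ≤ S := Finset.sum_nonneg fun i hi => (hterm i hi).le
  have hZ : (0 : ℝ) < 2 + μ * (N : ℝ) ^ 2 * S := by
    have : 0 ≤ μ * (N : ℝ) ^ 2 * S := by positivity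
    linarith
  set Z : ℝ := 2 + μ * (N : ℝ) ^ 2 * S with hZdef
  have hZne : Z ≠ 0 := ne_of_gt hZ
  refine ⟨?_, ?_, ?_⟩
  · intro j hj
    unfold moranBoundaryStat
    split
    · positivity
    · next h =>
      push_neg at h
      have h1 : (0 : ℝ) < (j : ℝ) := by
        have : 0 < j := Nat.pos_of_ne_zero h.1
        exact_mod_cast this
      have h2 : (j : ℝ) < (N : ℝ) := by
        have : j < N := lt_of_le_of_ne hj h.2
        exact_mod_cast this
      have : (0 : ℝ) < (j : ℝ) * ((N : ℝ) - j) := by nlinarith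
      positivity
  · have hsplit : ∑ j ∈ range (N + 1), moranBoundaryStat N μ j =
        moranBoundaryStat N μ 0 + (∑ j ∈ Ico 1 N, moranBoundaryStat N μ j)
          + moranBoundaryStat N μ N := by
      rw [Finset.sum_range_succ, Finset.range_eq_Ico,
        Finset.sum_eq_sum_Ico_succ_bot (by omega : 0 < N)]
    rw [hsplit]
    have h0 : moranBoundaryStat N μ 0 = Z⁻¹ := by
      unfold moranBoundaryStat; rw [if_pos (Or.inl rfl)]
    have hNs : moranBoundaryStat N μ N = Z⁻¹ := by
      unfold moranBoundaryStat; rw [if_pos (Or.inr rfl)]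
    have hmid : ∑ j ∈ Ico 1 N, moranBoundaryStat N μ j = Z⁻¹ * (μ * (N : ℝ) ^ 2 * S) := by
      rw [hS, Finset.mul_sum, Finset.mul_sum]
      apply Finset.sum_congr rfl
      intro j hj
      rw [mem_Ico] at hj
      have hj0 : j ≠ 0 := by omega
      have hjN : j ≠ N := by omega
      unfold moranBoundaryStat
      rw [if_neg (by tauto)]
      ring
    rw [h0, hNs, hmid]
    field_simp
    rw [hZdef]; ring
  · intro i hi
    have hup_pos : ∀ j : ℕ, j ≠ 0 → j < N →
        moranBoundaryStat N μ j = Z⁻¹ * (μ * (N : ℝ) ^ 2 / ((j : ℝ) * ((N : ℝ) - j))) := by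
      intro j hj0 hjN
      unfold moranBoundaryStat
      rw [if_neg (by push_neg; exact ⟨hj0, by omega⟩)]
    rcases Nat.eq_zero_or_pos i with hi0 | hipos
    · subst hi0
      rw [hup_pos 1 one_ne_zero (by omega)]
      unfold moranBoundaryStat moranBoundaryUp moranBoundaryDown
      rw [if_pos (Or.inl rfl), if_pos rfl, if_neg (by omega : (1 : ℕ) ≠ N)]
      have hN1 : (0 : ℝ) < (N : ℝ) - 1 := by linarith
      rw [← hS, ← hZdef]
      push_cast
      field_simp
    · have hi0 : i ≠ 0 := by omega
      have hiR : (0 : ℝ) < (i : ℝ) := by exact_mod_cast hipos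
      have hiN : (i : ℝ) < (N : ℝ) := by exact_mod_cast hi
      have hd : (0 : ℝ) < (i : ℝ) * ((N : ℝ) - i) := by nlinarith
      rw [hup_pos i hi0 hi]
      unfold moranBoundaryUp
      rw [if_neg hi0]
      rcases eq_or_ne (i + 1) N with hiN1 | hiN1
      · have : moranBoundaryStat N μ (i + 1) = Z⁻¹ := by
          unfold moranBoundaryStat; rw [if_pos (Or.inr hiN1)]
        rw [this]
        unfold moranBoundaryDown
        rw [if_pos hiN1]
        have hNi : (N : ℝ) - i ≠ 0 := by linarith
        field_simp
      · rw [hup_pos (i + 1) (by omega) (by omega)]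
        unfold moranBoundaryDown
        rw [if_neg hiN1]
        have hi1R : (0 : ℝ) < ((i : ℝ) + 1) := by linarith
        have hi1N : ((i : ℝ) + 1) < (N : ℝ) := by
          have : i + 1 < N := by omega
          exact_mod_cast this
        have hd1 : (0 : ℝ) < ((i : ℝ) + 1) * ((N : ℝ) - (i + 1)) := by nlinarith
        have hNi : (N : ℝ) - i ≠ 0 := by linarith
        have hNi1 : (N : ℝ) - (i + 1) ≠ 0 := by linarith
        push_cast
        field_simp
end

section
/- Entropy rate bound for the generalized Moran (incentive) process: every transition row has Shannon entropy at most (3/2)·log 2, hence the entropy rate is at most (3/2)·log 2, regardless of incentive functions, mutation rates, or population size. -/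
open Finset

/-- Shannon entropy of a triple (natural log, with Real.log 0 = 0). -/
noncomputable def H3 (a b c : ℝ) : ℝ :=
  -(a * Real.log a + b * Real.log b + c * Real.log c)

/-- Probability of an A-reproduction event in the incentive process. -/
noncomputable def pInc (N : ℕ) (φA φB μAB μBA : ℕ → ℝ) (i : ℕ) : ℝ :=
  (φA i * (1 - μAB i) + φB i * μBA (N - i)) / (φA i + φB i)

/-- Shannon entropy of the transition row (T_{i→i+1}, T_{i→i-1}, T_{i→i}) of the
incentive process. -/
noncomputable def incRowEntropy (N : ℕ) (φA φB μAB μBA : ℕ → ℝ) (i : ℕ) : ℝ :=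
  H3 (pInc N φA φB μAB μBA i * (((N : ℝ) - i) / N))
    ((1 - pInc N φA φB μAB μBA i) * ((i : ℝ) / N))
    (1 - pInc N φA φB μAB μBA i * (((N : ℝ) - i) / N)
       - (1 - pInc N φA φB μAB μBA i) * ((i : ℝ) / N))

private lemma log2_le_one : Real.log 2 ≤ 1 := by
  have := Real.log_le_sub_one_of_pos (by norm_num : (0:ℝ) < 2); linarith

private lemma half_le_log2 : (1:ℝ)/2 ≤ Real.log 2 := by
  have h := Real.log_le_sub_one_of_pos (by norm_num : (0:ℝ) < 1/2)
  rw [show ((1:ℝ)/2) = 2⁻¹ by norm_num, Real.log_inv] at h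
  linarith

-- Gibbs: -t log t ≤ -t log q + q - t
private lemma gibbs_term (t q : ℝ) (ht : 0 ≤ t) (hq : 0 < q) :
    -(t * Real.log t) ≤ -(t * Real.log q) + q - t := by
  rcases eq_or_lt_of_le ht with h | h
  · simp [← h]; positivity
  · have hqt : 0 < q / t := div_pos hq h
    have hl := Real.log_le_sub_one_of_pos hqt
    rw [Real.log_div (ne_of_gt hq) (ne_of_gt h)] at hl
    have h2 : t * (Real.log q - Real.log t) ≤ t * (q / t - 1) :=
      mul_le_mul_of_nonneg_left hl ht
    have h3 : t * (q / t - 1) = q - t := by field_simp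
    nlinarith [h2]

-- u² ln u + (1-u) ≥ ln2 (u-1)²
private lemma lemM (u : ℝ) (hu : 0 ≤ u) :
    Real.log 2 * (u - 1)^2 ≤ u^2 * Real.log u + (1 - u) := by
  rcases eq_or_lt_of_le hu with h | h
  · simp [← h]; nlinarith [log2_le_one]
  · have h1 : 1 - 1/u ≤ Real.log u := by
      have hi := Real.log_le_sub_one_of_pos (show (0:ℝ) < 1/u by positivity)
      rw [one_div, Real.log_inv] at hi
      have : 1/u = u⁻¹ := one_div u
      rw [this]; linarith
    have h2 : u^2 * (1 - 1/u) ≤ u^2 * Real.log u :=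
      mul_le_mul_of_nonneg_left h1 (by positivity)
    have h3 : u^2 * (1 - 1/u) = u^2 - u := by field_simp
    nlinarith [log2_le_one, sq_nonneg (u - 1)]

-- tangent line: -2s²log s ≤ (1/2)ln2 + (2ln2-1)(s-1/2), all s ≥ 0
private lemma lemL (s : ℝ) (hs : 0 ≤ s) :
    -(2 * s^2 * Real.log s) ≤ (1/2) * Real.log 2 + (2 * Real.log 2 - 1) * (s - 1/2) := by
  have hM := lemM (2*s) (by linarith)
  rcases eq_or_lt_of_le hs with h | h
  · simp [← h]; nlinarith [log2_le_one]
  · rw [Real.log_mul (by norm_num) (ne_of_gt h)] at hM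
    nlinarith [hM]

-- entropy pair bound: -a log a - b log b ≤ log 2 given √a + √b ≤ 1
private lemma pair_bound (a b : ℝ) (ha : 0 ≤ a) (hb : 0 ≤ b)
    (hab : Real.sqrt a + Real.sqrt b ≤ 1) :
    -(a * Real.log a) + -(b * Real.log b) ≤ Real.log 2 := by
  have key : ∀ t : ℝ, 0 ≤ t →
      -(t * Real.log t) ≤ (1/2) * Real.log 2 + (2 * Real.log 2 - 1) * (Real.sqrt t - 1/2) := by
    intro t ht
    have hst : Real.sqrt t ^ 2 = t := Real.sq_sqrt ht
    rcases eq_or_lt_of_le ht with h | h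
    · rw [← h]; simp [Real.sqrt_zero]; nlinarith [log2_le_one]
    · have hs : 0 < Real.sqrt t := Real.sqrt_pos.mpr h
      have hlog : Real.log t = 2 * Real.log (Real.sqrt t) := by
        conv_lhs => rw [← hst]
        rw [Real.log_pow]; push_cast; ring
      have hL := lemL (Real.sqrt t) (le_of_lt hs)
      have heq : t * Real.log t = 2 * Real.sqrt t ^ 2 * Real.log (Real.sqrt t) := by
        rw [hst, hlog]; ring
      linarith [hL, heq.ge, heq.le]
  have h1 := key a ha
  have h2 := key b hb
  have h3 : (2 * Real.log 2 - 1) * (Real.sqrt a + Real.sqrt b - 1) ≤ 0 := by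
    apply mul_nonpos_of_nonneg_of_nonpos
    · nlinarith [half_le_log2]
    · linarith
  nlinarith [h1, h2, h3]

-- core lemma
private lemma core (p x : ℝ) (hp0 : 0 ≤ p) (hp1 : p ≤ 1) (hx0 : 0 ≤ x) (hx1 : x ≤ 1) :
    H3 (p * x) ((1 - p) * (1 - x)) (1 - p * x - (1 - p) * (1 - x)) ≤ (3/2) * Real.log 2 := by
  set a := p * x with hadef
  set b := (1 - p) * (1 - x) with hbdef
  set c := 1 - a - b with hcdef
  have ha : 0 ≤ a := mul_nonneg hp0 hx0
  have hb : 0 ≤ b := mul_nonneg (by linarith) (by linarith)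
  have hc : 0 ≤ c := by
    have : c = p * (1 - x) + (1 - p) * x := by rw [hcdef, hadef, hbdef]; ring
    rw [this]
    have := mul_nonneg hp0 (by linarith : (0:ℝ) ≤ 1 - x)
    have := mul_nonneg (by linarith : (0:ℝ) ≤ 1 - p) hx0
    linarith
  -- √a + √b ≤ 1
  have hsab : Real.sqrt a + Real.sqrt b ≤ 1 := by
    have h1 : Real.sqrt a ≤ (p + x) / 2 := by
      rw [show (p+x)/2 = Real.sqrt (((p+x)/2)^2) from (Real.sqrt_sq (by linarith)).symm]
      apply Real.sqrt_le_sqrt; nlinarith [sq_nonneg (p - x)]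
    have h2 : Real.sqrt b ≤ ((1-p) + (1-x)) / 2 := by
      rw [show ((1-p)+(1-x))/2 = Real.sqrt ((((1-p)+(1-x))/2)^2) from
        (Real.sqrt_sq (by linarith)).symm]
      apply Real.sqrt_le_sqrt; nlinarith [sq_nonneg (p - x)]
    linarith
  -- per-term root bounds via Gibbs
  have stepA : ∀ t : ℝ, 0 ≤ t →
      -(t * Real.log t) ≤ -(t/2 * Real.log t) + t * Real.log 2 + Real.sqrt t / 2 - t := by
    intro t ht
    rcases eq_or_lt_of_le ht with h | h
    · rw [← h]; simp
    · have hs : 0 < Real.sqrt t := Real.sqrt_pos.mpr h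
      have hg := gibbs_term t (Real.sqrt t / 2) (le_of_lt h) (by positivity)
      have hlq : Real.log (Real.sqrt t / 2) = (1/2) * Real.log t - Real.log 2 := by
        rw [Real.log_div (ne_of_gt hs) (by norm_num), Real.log_sqrt ht]; ring
      rw [hlq] at hg; nlinarith [hg]
  have h1 := stepA a ha
  have h2 := stepA b hb
  have h3 : -(c * Real.log c) ≤ c * Real.log 2 + 1/2 - c := by
    have hg := gibbs_term c (1/2) hc (by norm_num)
    rw [show Real.log (1/2 : ℝ) = -Real.log 2 by
      rw [one_div, Real.log_inv]] at hg
    linarith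
  have hpair := pair_bound a b ha hb hsab
  have habc : a + b + c = 1 := by rw [hcdef]; ring
  unfold H3
  nlinarith [h1, h2, h3, hpair, hsab]

theorem incentive_entropyRate_le (N : ℕ) (hN : 2 ≤ N) (φA φB μAB μBA : ℕ → ℝ)
    (hφA : ∀ i, 1 ≤ i → i ≤ N - 1 → 0 < φA i)
    (hφB : ∀ i, 1 ≤ i → i ≤ N - 1 → 0 < φB i)
    (hμAB : ∀ i, μAB i ∈ Set.Icc (0 : ℝ) 1)
    (hμBA : ∀ i, μBA i ∈ Set.Icc (0 : ℝ) 1) :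
    (∀ i, 1 ≤ i → i ≤ N - 1 →
      incRowEntropy N φA φB μAB μBA i ≤ (3 / 2) * Real.log 2) ∧
    (∀ s : ℕ → ℝ, (∀ i, 0 ≤ s i) → (∑ i ∈ Ico 1 N, s i) = 1 →
      ∑ i ∈ Ico 1 N, s i * incRowEntropy N φA φB μAB μBA i ≤ (3 / 2) * Real.log 2) := by
  have hNR : (0:ℝ) < N := by positivity
  have main : ∀ i, 1 ≤ i → i ≤ N - 1 →
      incRowEntropy N φA φB μAB μBA i ≤ (3 / 2) * Real.log 2 := by
    intro i hi1 hi2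
    have hiN : i < N := by omega
    have hiR : (i:ℝ) ≤ N := by exact_mod_cast le_of_lt hiN
    have hiR0 : (0:ℝ) ≤ i := by positivity
    set p := pInc N φA φB μAB μBA i with hpdef
    have hA := hφA i hi1 hi2
    have hB := hφB i hi1 hi2
    have hμ1 := hμAB i
    have hμ2 := hμBA (N - i)
    simp only [Set.mem_Icc] at hμ1 hμ2
    have hden : 0 < φA i + φB i := by linarith
    have hp0 : 0 ≤ p := by
      rw [hpdef]; unfold pInc
      apply div_nonneg _ (le_of_lt hden)
      have := mul_nonneg (le_of_lt hA) (by linarith [hμ1.2] : (0:ℝ) ≤ 1 - μAB i)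
      have := mul_nonneg (le_of_lt hB) hμ2.1
      linarith
    have hp1 : p ≤ 1 := by
      rw [hpdef]; unfold pInc
      rw [div_le_one hden]
      have h1 : φA i * (1 - μAB i) ≤ φA i := by nlinarith [hμ1.1]
      have h2 : φB i * μBA (N - i) ≤ φB i := by nlinarith [hμ2.2]
      linarith
    set x := ((N:ℝ) - i) / N with hxdef
    have hx0 : 0 ≤ x := by
      apply div_nonneg _ (le_of_lt hNR); linarith
    have hx1 : x ≤ 1 := by
      rw [hxdef, div_le_one hNR]; linarith
    have hix : (i:ℝ) / N = 1 - x := by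
      rw [hxdef]; field_simp; ring
    unfold incRowEntropy
    rw [← hpdef, ← hxdef, hix]
    exact core p x hp0 hp1 hx0 hx1
  refine ⟨main, ?_⟩
  intro s hs hsum
  calc ∑ i ∈ Ico 1 N, s i * incRowEntropy N φA φB μAB μBA i
      ≤ ∑ i ∈ Ico 1 N, s i * ((3/2) * Real.log 2) := by
        apply sum_le_sum
        intro i hi
        rw [mem_Ico] at hi
        exact mul_le_mul_of_nonneg_left (main i hi.1 (by omega)) (hs i)
    _ = (∑ i ∈ Ico 1 N, s i) * ((3/2) * Real.log 2) := by rw [← sum_mul]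
    _ = (3/2) * Real.log 2 := by rw [hsum, one_mul]
end

section
/- For the tridiagonal boundary-mutation Moran process over the neutral landscape with asymmetric mutation rates μ_{AB} and μ_{BA} = k·μ_{AB}, the stationary distribution is s₀ = (1 + μ_{AB}N² Σᵢ₌₁^{N-1} 1/(i(N-i)) + 1/k)⁻¹, s_j = s₀·μ_{AB}N²/(j(N-j)) for 1 ≤ j ≤ N-1, and s_N = s₀/k. -/
open Finset

/-- Stationary distribution of the neutral boundary-mutation Moran process with
asymmetric mutation rates μ_{AB} and μ_{BA} = k·μ_{AB}. -/
noncomputable def moranAsymStat (N : ℕ) (μAB k : ℝ) (j : ℕ) : ℝ :=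
  if j = 0 then
    (1 + μAB * (N : ℝ) ^ 2 * (∑ i ∈ Ico 1 N, 1 / ((i : ℝ) * ((N : ℝ) - i))) + 1 / k)⁻¹
  else if j = N then
    (1 + μAB * (N : ℝ) ^ 2 * (∑ i ∈ Ico 1 N, 1 / ((i : ℝ) * ((N : ℝ) - i))) + 1 / k)⁻¹ / k
  else
    (1 + μAB * (N : ℝ) ^ 2 * (∑ i ∈ Ico 1 N, 1 / ((i : ℝ) * ((N : ℝ) - i))) + 1 / k)⁻¹
      * (μAB * (N : ℝ) ^ 2 / ((j : ℝ) * ((N : ℝ) - j)))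

/-- Up-transition T_{i→i+1}: μ_{AB} at i = 0, i(N-i)/N² for 1 ≤ i ≤ N-1. -/
noncomputable def moranAsymUp (N : ℕ) (μAB k : ℝ) (i : ℕ) : ℝ :=
  if i = 0 then μAB else (i : ℝ) * ((N : ℝ) - i) / (N : ℝ) ^ 2

/-- Down-transition T_{i→i-1}: k·μ_{AB} at i = N, i(N-i)/N² for 1 ≤ i ≤ N-1. -/
noncomputable def moranAsymDown (N : ℕ) (μAB k : ℝ) (i : ℕ) : ℝ :=
  if i = N then k * μAB else (i : ℝ) * ((N : ℝ) - i) / (N : ℝ) ^ 2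

theorem moranAsym_stationary (N : ℕ) (hN : 2 ≤ N) (μAB k : ℝ)
    (hμ : μAB ∈ Set.Ioo (0 : ℝ) 1) (hk : 0 < k) (hkμ : k * μAB ∈ Set.Ioo (0 : ℝ) 1) :
    (∑ j ∈ range (N + 1), moranAsymStat N μAB k j) = 1 ∧
    (∀ i < N, moranAsymStat N μAB k i * moranAsymUp N μAB k i
        = moranAsymStat N μAB k (i + 1) * moranAsymDown N μAB k (i + 1)) := by
  have hNR : (0:ℝ) < N := by positivity
  have hNne : (N:ℝ) ≠ 0 := ne_of_gt hNR
  have hμ0 : 0 < μAB := hμ.1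
  have hkne : k ≠ 0 := ne_of_gt hk
  set S : ℝ := ∑ i ∈ Ico 1 N, 1 / ((i : ℝ) * ((N : ℝ) - i)) with hS
  have hterm : ∀ i ∈ Ico 1 N, (0:ℝ) < (i : ℝ) * ((N : ℝ) - i) := by
    intro i hi
    rw [mem_Ico] at hi
    have h1 : (1:ℝ) ≤ i := by exact_mod_cast hi.1
    have h2 : (i:ℝ) < N := by exact_mod_cast hi.2
    nlinarith
  have hSpos : 0 < S := by
    rw [hS]
    apply Finset.sum_pos
    · intro i hi
      exact div_pos one_pos (hterm i hi)
    · exact ⟨1, mem_Ico.mpr ⟨le_refl 1, hN⟩⟩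
  have hZpos : 0 < 1 + μAB * (N : ℝ) ^ 2 * S + 1 / k := by
    have h1 : 0 < μAB * (N:ℝ)^2 * S := by positivity
    have h2 : 0 < 1/k := by positivity
    linarith
  set Z : ℝ := 1 + μAB * (N : ℝ) ^ 2 * S + 1 / k with hZ
  have hZne : Z ≠ 0 := ne_of_gt hZpos
  have h0 : moranAsymStat N μAB k 0 = Z⁻¹ := by
    simp [moranAsymStat, hZ, hS]
  have hNval : moranAsymStat N μAB k N = Z⁻¹ / k := by
    have hN0 : N ≠ 0 := by omega
    simp [moranAsymStat, hN0, hZ, hS]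
  have hmid : ∀ j : ℕ, j ≠ 0 → j ≠ N →
      moranAsymStat N μAB k j = Z⁻¹ * (μAB * (N:ℝ)^2 / ((j : ℝ) * ((N : ℝ) - j))) := by
    intro j h1 h2
    simp [moranAsymStat, h1, h2, hZ, hS]
  clear_value S Z
  constructor
  · -- sum equals 1
    have hsplit : range (N+1) = insert 0 (insert N (Ico 1 N)) := by
      ext j
      simp only [mem_range, mem_insert, mem_Ico]
      omega
    rw [hsplit, Finset.sum_insert, Finset.sum_insert]
    · have hmid' : ∀ j ∈ Ico 1 N,
          moranAsymStat N μAB k j = Z⁻¹ * (μAB * (N:ℝ)^2) * (1 / ((j : ℝ) * ((N : ℝ) - j))) := by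
        intro j hj
        rw [mem_Ico] at hj
        rw [hmid j (by omega) (by omega)]
        ring
      rw [h0, hNval, Finset.sum_congr rfl hmid', ← Finset.mul_sum, ← hS]
      have : Z⁻¹ + Z⁻¹ / k + Z⁻¹ * (μAB * (N:ℝ)^2) * S = Z⁻¹ * Z := by
        rw [hZ]; field_simp; ring
      rw [inv_mul_cancel₀ hZne] at this
      linarith [this]
    · rw [mem_Ico]; omega
    · simp only [mem_insert, mem_Ico]
      omega
  · intro i hi
    have hiN : i ≠ N := by omega
    rcases Nat.eq_zero_or_pos i with hz | hpos
    · -- i = 0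
      subst hz
      have h1N : (0:ℕ)+1 ≠ N := by omega
      rw [h0, hmid (0+1) (by omega) h1N]
      simp only [moranAsymUp, moranAsymDown, if_pos rfl, if_neg h1N]
      push_cast
      have hne : (0:ℝ) + 1 ≠ 0 := by norm_num
      have hne2 : (N:ℝ) - (0+1) ≠ 0 := by
        have : (2:ℝ) ≤ N := by exact_mod_cast hN
        intro h; linarith
      rw [mul_assoc]
      congr 1
      have hN1 : (N:ℝ) - 1 ≠ 0 := by
        have : (2:ℝ) ≤ N := by exact_mod_cast hN
        intro h; linarith
      field_simp
    · rcases Nat.lt_or_ge (i+1) N with hlt | hge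
      · -- 1 ≤ i ≤ N-2
        rw [hmid i (by omega) hiN, hmid (i+1) (by omega) (by omega)]
        simp only [moranAsymUp, moranAsymDown, if_neg (by omega : i ≠ 0),
          if_neg (by omega : i + 1 ≠ N)]
        have h1' : (1:ℝ) ≤ i := by exact_mod_cast hpos
        have h2' : (i:ℝ) < N := by exact_mod_cast hi
        have h3' : ((i:ℝ)+1) < N := by exact_mod_cast hlt
        push_cast
        have ha : (i:ℝ) ≠ 0 := by linarith
        have hb : (N:ℝ) - i ≠ 0 := by intro h; linarith
        have hc : (i:ℝ) + 1 ≠ 0 := by linarith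
        have hd : (N:ℝ) - ((i:ℝ)+1) ≠ 0 := by intro h; linarith
        field_simp
      · -- i = N - 1
        have hiNm : i + 1 = N := by omega
        rw [hmid i (by omega) hiN, hiNm, hNval]
        simp only [moranAsymUp, moranAsymDown, if_neg (by omega : i ≠ 0), if_pos rfl]
        have hiR : (i:ℝ) = (N:ℝ) - 1 := by
          have : (i:ℝ) + 1 = N := by exact_mod_cast hiNm
          linarith
        rw [hiR]
        have h2N : (2:ℝ) ≤ N := by exact_mod_cast hN
        have ha : (N:ℝ) - 1 ≠ 0 := by intro h; linarith
        have hb : (N:ℝ) - ((N:ℝ)-1) ≠ 0 := by intro h; linarith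
        field_simp
        simp
end
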